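/- In a residuated lattice, every coannihilator (a filter of the form X^⊥ for some subset X) is an α-filter, and every minimal prime filter is an α-filter. -/
import Mathlib


/-- A (bounded, integral, commutative) residuated lattice. -/
class ResLattice (A : Type*) extends Lattice A, CommMonoid A, OrderBot A where
  himp : A → A → A
  adjunction : ∀ x y z : A, x * y ≤ z ↔ x ≤ himp y z
  le_one : ∀ x : A, x ≤ 1

variable {A : Type*} [ResLattice A]

/-- Coannihilator of a subset: `X^⊥ = {a | a ⊔ x = 1 for all x ∈ X}`. -/
def Coann (X : Set A) : Set A := {a | ∀ x ∈ X, a ⊔ x = 1}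

/-- Coannulet of an element: `x^⊥`. -/
def rperp (x : A) : Set A := Coann {x}

/-- The principal filter generated by `x`. -/
def PFil (x : A) : Set A := {a | ∃ n : ℕ, 0 < n ∧ x ^ n ≤ a}

/-- Filters of a residuated lattice. -/
def IsRLFilter (F : Set A) : Prop :=
  F.Nonempty ∧ (∀ x ∈ F, ∀ y ∈ F, x * y ∈ F) ∧ (∀ x ∈ F, ∀ y : A, x ⊔ y ∈ F)

/-- Prime filters. -/
def IsRLPrime (P : Set A) : Prop :=
  IsRLFilter P ∧ P ≠ Set.univ ∧ ∀ x y : A, x ⊔ y ∈ P → x ∈ P ∨ y ∈ P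

/-- Minimal prime filters. -/
def IsRLMinPrime (P : Set A) : Prop :=
  IsRLPrime P ∧ ∀ Q : Set A, IsRLPrime Q → Q ⊆ P → Q = P

/-- Quasicomplemented residuated lattice. -/
def Quasicomplemented (A : Type*) [ResLattice A] : Prop :=
  ∀ x : A, ∃ y : A, Coann (rperp x) = rperp y

/-- α-filters. -/
def IsAlphaFilter (F : Set A) : Prop :=
  IsRLFilter F ∧ ∀ x ∈ F, Coann (rperp x) ⊆ F

/-- The α-filter generated by a subset. -/
def alphaGen (X : Set A) : Set A := ⋂₀ {G : Set A | IsAlphaFilter G ∧ X ⊆ G}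


section Helpers

lemma rl_le_top (x : A) : x ≤ 1 := ResLattice.le_one x

lemma rl_sup_one (x : A) : x ⊔ (1:A) = 1 := sup_eq_right.mpr (rl_le_top x)

lemma rl_mul_le_mul_left' {b c : A} (a : A) (h : b ≤ c) : a * b ≤ a * c := by
  have h1 : c * a ≤ a * c := le_of_eq (mul_comm c a)
  have h2 : c ≤ ResLattice.himp a (a * c) := (ResLattice.adjunction c a (a*c)).mp h1
  have h3 : b ≤ ResLattice.himp a (a * c) := le_trans h h2
  have h4 := (ResLattice.adjunction b a (a*c)).mpr h3
  calc a * b = b * a := mul_comm _ _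
    _ ≤ a * c := h4

lemma rl_mul_le_mul' {a b c d : A} (h1 : a ≤ b) (h2 : c ≤ d) : a * c ≤ b * d := by
  have := rl_mul_le_mul_left' a h2
  have h3 : a * d ≤ b * d := by
    rw [mul_comm a d, mul_comm b d]; exact rl_mul_le_mul_left' d h1
  exact le_trans this h3

lemma rl_mul_le_left (a b : A) : a * b ≤ a := by
  have := rl_mul_le_mul_left' a (rl_le_top b)
  simpa using this

lemma rl_mul_le_right (a b : A) : a * b ≤ b := by
  rw [mul_comm]; exact rl_mul_le_left b a

lemma rl_mul_sup (a b c : A) : a * (b ⊔ c) = a * b ⊔ a * c := by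
  apply le_antisymm
  · have hb : b ≤ ResLattice.himp a (a*b ⊔ a*c) :=
      (ResLattice.adjunction b a _).mp (le_trans (le_of_eq (mul_comm b a)) le_sup_left)
    have hc : c ≤ ResLattice.himp a (a*b ⊔ a*c) :=
      (ResLattice.adjunction c a _).mp (le_trans (le_of_eq (mul_comm c a)) le_sup_right)
    have := (ResLattice.adjunction (b ⊔ c) a _).mpr (sup_le hb hc)
    calc a * (b ⊔ c) = (b ⊔ c) * a := mul_comm _ _
      _ ≤ a * b ⊔ a * c := this
  · exact sup_le (rl_mul_le_mul_left' a le_sup_left) (rl_mul_le_mul_left' a le_sup_right)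

lemma rl_sup_mul (a b c : A) : (a ⊔ b) * c = a * c ⊔ b * c := by
  rw [mul_comm, rl_mul_sup, mul_comm c a, mul_comm c b]

lemma rl_pow_sup (a b : A) : ∀ n m : ℕ, (a ⊔ b) ^ (n + m) ≤ a ^ n ⊔ b ^ m
  | 0, m => by
    simpa using le_trans (rl_le_top _) (le_sup_left : (1:A) ≤ 1 ⊔ b ^ m)
  | n+1, 0 => by
    simpa using le_trans (rl_le_top _) (le_sup_right : (1:A) ≤ a ^ (n+1) ⊔ 1)
  | n+1, m+1 => by
    have key : (a ⊔ b) ^ (n + 1 + (m + 1)) = (a ⊔ b) * (a ⊔ b) ^ (n + (m+1)) := by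
      rw [← pow_succ']; ring_nf
    have h1 : a * (a ⊔ b) ^ (n + (m+1)) ≤ a ^ (n+1) ⊔ b ^ (m+1) := by
      calc a * (a ⊔ b) ^ (n + (m+1)) ≤ a * (a ^ n ⊔ b ^ (m+1)) :=
            rl_mul_le_mul_left' a (rl_pow_sup a b n (m+1))
        _ = a * a ^ n ⊔ a * b ^ (m+1) := rl_mul_sup _ _ _
        _ ≤ a ^ (n+1) ⊔ b ^ (m+1) :=
            sup_le (le_trans (le_of_eq (pow_succ' a n).symm) le_sup_left)
              (le_trans (rl_mul_le_right a _) le_sup_right)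
    have h2 : b * (a ⊔ b) ^ (n + 1 + m) ≤ a ^ (n+1) ⊔ b ^ (m+1) := by
      calc b * (a ⊔ b) ^ (n + 1 + m) ≤ b * (a ^ (n+1) ⊔ b ^ m) :=
            rl_mul_le_mul_left' b (rl_pow_sup a b (n+1) m)
        _ = b * a ^ (n+1) ⊔ b * b ^ m := rl_mul_sup _ _ _
        _ ≤ a ^ (n+1) ⊔ b ^ (m+1) :=
            sup_le (le_trans (rl_mul_le_right b _) le_sup_left)
              (le_trans (le_of_eq (pow_succ' b m).symm) le_sup_right)
    have hne : n + (m+1) = n + 1 + m := by omega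
    calc (a ⊔ b) ^ (n + 1 + (m + 1)) = (a ⊔ b) * (a ⊔ b) ^ (n + (m+1)) := key
      _ = a * (a ⊔ b) ^ (n + (m+1)) ⊔ b * (a ⊔ b) ^ (n + (m+1)) := rl_sup_mul _ _ _
      _ ≤ a ^ (n+1) ⊔ b ^ (m+1) := by
          rw [← hne] at h2; exact sup_le h1 h2

lemma rl_one_mem {F : Set A} (hF : IsRLFilter F) : (1:A) ∈ F := by
  obtain ⟨⟨q, hq⟩, _, hsup⟩ := hF
  have := hsup q hq 1
  rwa [rl_sup_one] at this

lemma rl_mem_of_le {F : Set A} (hF : IsRLFilter F) {a b : A} (ha : a ∈ F) (h : a ≤ b) :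
    b ∈ F := by
  have := hF.2.2 a ha b
  rwa [sup_eq_right.mpr h] at this

lemma rl_pow_mem {F : Set A} (hF : IsRLFilter F) {a : A} (ha : a ∈ F) (n : ℕ) :
    a ^ n ∈ F := by
  induction n with
  | zero => simpa using rl_one_mem hF
  | succ k ih => rw [pow_succ]; exact hF.2.1 _ ih _ ha

/-- Key lemma: in a minimal prime filter, every element has a "complement" outside. -/
lemma rl_minprime_perp {P : Set A} (hP : IsRLMinPrime P) {x : A} (hx : x ∈ P) :
    ∃ d, d ∉ P ∧ x ⊔ d = 1 := by
  by_contra hcon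
  push_neg at hcon
  -- the lattice ideal I generated by x and the complement of P
  set I : Set A := {z | ∃ d, d ∉ P ∧ z ≤ x ⊔ d} with hI
  obtain ⟨⟨hPfil, hPne, hPpr⟩, hPmin⟩ := hP
  -- P ≠ univ gives some d0 ∉ P
  have hd0 : ∃ d0, d0 ∉ P := by
    by_contra h
    push_neg at h
    exact hPne (Set.eq_univ_of_forall h)
  obtain ⟨d0, hd0⟩ := hd0
  have hxI : x ∈ I := ⟨d0, hd0, le_sup_left⟩
  have hbotI : (⊥:A) ∈ I := ⟨d0, hd0, bot_le⟩
  have honeI : (1:A) ∉ I := by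
    rintro ⟨d, hd, hle⟩
    exact hcon d hd (le_antisymm (rl_le_top _) hle)
  -- I is closed under sup
  have hIsup : ∀ z₁ ∈ I, ∀ z₂ ∈ I, z₁ ⊔ z₂ ∈ I := by
    rintro z₁ ⟨d₁, hd₁, h₁⟩ z₂ ⟨d₂, hd₂, h₂⟩
    refine ⟨d₁ ⊔ d₂, ?_, ?_⟩
    · intro h
      rcases hPpr d₁ d₂ h with h | h
      · exact hd₁ h
      · exact hd₂ h
    · exact sup_le (le_trans h₁ (sup_le le_sup_left (le_trans le_sup_left le_sup_right)))
        (le_trans h₂ (sup_le le_sup_left (le_trans le_sup_right le_sup_right)))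
  have hIdown : ∀ z₁ ∈ I, ∀ z₂ : A, z₂ ≤ z₁ → z₂ ∈ I := by
    rintro z₁ ⟨d, hd, h₁⟩ z₂ h₂
    exact ⟨d, hd, le_trans h₂ h₁⟩
  -- Zorn: maximal filter disjoint from I
  set S : Set (Set A) := {Q | IsRLFilter Q ∧ ∀ z ∈ Q, z ∉ I} with hS
  have hone : ({1} : Set A) ∈ S := by
    constructor
    · refine ⟨⟨1, rfl⟩, ?_, ?_⟩
      · rintro a rfl b rfl; simp
      · rintro a rfl b; simp [sup_eq_left.mpr (rl_le_top b)]
    · rintro z rfl; exact honeI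
  have hchain : ∀ c ⊆ S, IsChain (· ⊆ ·) c → c.Nonempty → ∃ ub ∈ S, ∀ s ∈ c, s ⊆ ub := by
    intro c hcS hc ⟨Q0, hQ0⟩
    refine ⟨⋃₀ c, ⟨⟨⟨1, Set.mem_sUnion.mpr ⟨Q0, hQ0, rl_one_mem (hcS hQ0).1⟩⟩, ?_, ?_⟩, ?_⟩,
      fun s hs => Set.subset_sUnion_of_mem hs⟩
    · rintro a ⟨Q1, hQ1, ha⟩ b ⟨Q2, hQ2, hb⟩
      rcases hc.total hQ1 hQ2 with h | h
      · exact ⟨Q2, hQ2, (hcS hQ2).1.2.1 a (h ha) b hb⟩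
      · exact ⟨Q1, hQ1, (hcS hQ1).1.2.1 a ha b (h hb)⟩
    · rintro a ⟨Q1, hQ1, ha⟩ b
      exact ⟨Q1, hQ1, (hcS hQ1).1.2.2 a ha b⟩
    · rintro z ⟨Q1, hQ1, hz⟩
      exact (hcS hQ1).2 z hz
  obtain ⟨Q, -, hQS, hQmax⟩ := zorn_subset_nonempty S hchain _ hone
  obtain ⟨hQfil, hQdisj⟩ := hQS
  -- key step: if a ∉ Q then some q * a^n ∈ I with q ∈ Q
  have hstep : ∀ a : A, a ∉ Q → ∃ q ∈ Q, ∃ n : ℕ, q * a ^ n ∈ I := by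
    intro a ha
    set Q' : Set A := {z | ∃ q ∈ Q, ∃ n : ℕ, q * a ^ n ≤ z} with hQ'
    have hQ'fil : IsRLFilter Q' := by
      refine ⟨⟨1, 1, rl_one_mem hQfil, 0, by simp⟩, ?_, ?_⟩
      · rintro z₁ ⟨q₁, hq₁, n₁, h₁⟩ z₂ ⟨q₂, hq₂, n₂, h₂⟩
        refine ⟨q₁ * q₂, hQfil.2.1 _ hq₁ _ hq₂, n₁ + n₂, ?_⟩
        calc q₁ * q₂ * a ^ (n₁ + n₂) = (q₁ * a ^ n₁) * (q₂ * a ^ n₂) := by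
              rw [pow_add, mul_mul_mul_comm]
          _ ≤ z₁ * z₂ := rl_mul_le_mul' h₁ h₂
      · rintro z₁ ⟨q₁, hq₁, n₁, h₁⟩ y
        exact ⟨q₁, hq₁, n₁, le_trans h₁ le_sup_left⟩
    have hQsub : Q ⊆ Q' := fun q hq => ⟨q, hq, 0, by simp⟩
    have haQ' : a ∈ Q' := ⟨1, rl_one_mem hQfil, 1, by simp⟩
    have hne : Q ≠ Q' := fun h => ha (h ▸ haQ')
    have : ¬ (∀ z ∈ Q', z ∉ I) := by
      intro h
      exact hne (subset_antisymm hQsub (hQmax ⟨hQ'fil, h⟩ hQsub))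
    push_neg at this
    obtain ⟨z, ⟨q, hq, n, hle⟩, hzI⟩ := this
    exact ⟨q, hq, n, hIdown z hzI _ hle⟩
  -- Q is prime
  have hQprime : IsRLPrime Q := by
    refine ⟨hQfil, ?_, ?_⟩
    · intro h
      exact hQdisj ⊥ (h ▸ Set.mem_univ ⊥) hbotI
    · intro a b hab
      by_contra h
      push_neg at h
      obtain ⟨ha, hb⟩ := h
      obtain ⟨q₁, hq₁, n, hn⟩ := hstep a ha
      obtain ⟨q₂, hq₂, m, hm⟩ := hstep b hb
      obtain ⟨d₁, hd₁, hle₁⟩ := hn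
      obtain ⟨d₂, hd₂, hle₂⟩ := hm
      have hd : d₁ ⊔ d₂ ∉ P := by
        intro h
        rcases hPpr d₁ d₂ h with h | h
        · exact hd₁ h
        · exact hd₂ h
      have hkey : (q₁ * q₂) * (a ⊔ b) ^ (n + m) ≤ x ⊔ (d₁ ⊔ d₂) := by
        calc (q₁ * q₂) * (a ⊔ b) ^ (n + m) ≤ (q₁ * q₂) * (a ^ n ⊔ b ^ m) :=
              rl_mul_le_mul_left' _ (rl_pow_sup a b n m)
          _ = (q₁ * q₂) * a ^ n ⊔ (q₁ * q₂) * b ^ m := rl_mul_sup _ _ _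
          _ ≤ (q₁ * a ^ n) ⊔ (q₂ * b ^ m) := by
              refine sup_le (le_trans ?_ le_sup_left) (le_trans ?_ le_sup_right)
              · exact le_trans (le_of_eq (mul_right_comm q₁ q₂ (a ^ n)))
                  (rl_mul_le_left _ _)
              · have he : (q₁ * q₂) * b ^ m = (q₂ * b ^ m) * q₁ := by
                  rw [mul_comm q₁ q₂, mul_right_comm]
                exact le_trans (le_of_eq he) (rl_mul_le_left _ _)
          _ ≤ (x ⊔ d₁) ⊔ (x ⊔ d₂) := sup_le_sup hle₁ hle₂
          _ ≤ x ⊔ (d₁ ⊔ d₂) := sup_le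
              (sup_le le_sup_left (le_trans le_sup_left le_sup_right))
              (sup_le le_sup_left (le_trans le_sup_right le_sup_right))
      have hmemQ : (q₁ * q₂) * (a ⊔ b) ^ (n + m) ∈ Q :=
        hQfil.2.1 _ (hQfil.2.1 _ hq₁ _ hq₂) _ (rl_pow_mem hQfil hab _)
      exact hQdisj _ hmemQ ⟨d₁ ⊔ d₂, hd, hkey⟩
  -- Q ⊆ P
  have hQP : Q ⊆ P := by
    intro q hq
    by_contra hqP
    exact hQdisj q hq ⟨q, hqP, le_sup_right⟩
  have : Q = P := hPmin Q hQprime hQP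
  exact hQdisj x (this ▸ hx) hxI

end Helpers

theorem stmt16 :
    (∀ X : Set A, IsAlphaFilter (Coann X)) ∧
    (∀ P : Set A, IsRLMinPrime P → IsAlphaFilter P) := by
  constructor
  · intro X
    constructor
    · refine ⟨⟨1, fun x _ => sup_eq_left.mpr (rl_le_top x)⟩, ?_, ?_⟩
      · intro a ha b hb x hx
        have h1 : a ⊔ x = 1 := ha x hx
        have h2 : b ⊔ x = 1 := hb x hx
        have hle : (1:A) ≤ a * b ⊔ x := by
          calc (1:A) = (a ⊔ x) * (b ⊔ x) := by rw [h1, h2, one_mul]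
            _ = (a ⊔ x) * b ⊔ (a ⊔ x) * x := rl_mul_sup _ _ _
            _ = (a * b ⊔ x * b) ⊔ (a * x ⊔ x * x) := by rw [rl_sup_mul, rl_sup_mul]
            _ ≤ a * b ⊔ x := by
                refine sup_le (sup_le le_sup_left ?_) (sup_le ?_ ?_)
                · exact le_trans (rl_mul_le_left _ _) le_sup_right
                · exact le_trans (rl_mul_le_right _ _) le_sup_right
                · exact le_trans (rl_mul_le_right _ _) le_sup_right
        exact le_antisymm (rl_le_top _) hle
      · intro a ha y x hx
        have h1 : a ⊔ x = 1 := ha x hx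
        apply le_antisymm (rl_le_top _)
        calc (1:A) = a ⊔ x := h1.symm
          _ ≤ (a ⊔ y) ⊔ x := sup_le_sup_right le_sup_left x
    · intro x hx b hb y hy
      have hxy : x ⊔ y = 1 := hx y hy
      have : y ∈ rperp x := by
        intro z hz
        rw [Set.mem_singleton_iff.mp hz]
        rw [sup_comm]; exact hxy
      exact hb y this
  · intro P hP
    refine ⟨hP.1.1, ?_⟩
    intro x hx b hb
    obtain ⟨d, hdP, hxd⟩ := rl_minprime_perp hP hx
    have hd : d ∈ rperp x := by
      intro z hz
      rw [Set.mem_singleton_iff.mp hz, sup_comm]; exact hxd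
    have hbd : b ⊔ d = 1 := hb d hd
    have h1 : b ⊔ d ∈ P := hbd ▸ rl_one_mem hP.1.1
    rcases hP.1.2.2 b d h1 with h | h
    · exact h
    · exact absurd h hdP
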